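/- Let g(x) = 2x on [0, 1/2] and g(x) = 2 − 2x on (1/2, 1], and let g_s be its s-fold self-composition. Then g_s has exactly 2^s − 1 interior breakpoints, located at the points k/2^s for k = 1, …, 2^s − 1, and g_s(k/2^s) = 0 for even k and g_s(k/2^s) = 1 for odd k. -/

import Mathlib

noncomputable def hatFn : ℝ → ℝ := fun x => if x ≤ 1/2 then 2 * x else 2 - 2 * x

lemma hatFn_left {x : ℝ} (hx : x ≤ 1/2) : hatFn x = 2 * x := if_pos hx

lemma hatFn_right {x : ℝ} (hx : 1/2 ≤ x) : hatFn x = 2 - 2 * x := by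
  unfold hatFn
  split_ifs with h
  · have : x = 1/2 := le_antisymm h hx
    rw [this]; norm_num
  · rfl

lemma hat_iter (s : ℕ) : ∀ k : ℕ, k < 2^s → ∀ x ∈ Set.Icc ((k:ℝ)/2^s) (((k:ℝ)+1)/2^s),
    hatFn^[s] x = if Even k then 2^s * x - k else ((k:ℝ)+1) - 2^s * x := by
  induction s with
  | zero =>
    intro k hk x hx
    interval_cases k
    simp only [Set.mem_Icc] at hx
    simp only [Function.iterate_zero_apply, pow_zero, Nat.cast_zero, Even.zero, if_true]
    push_cast at hx ⊢
    ring
  | succ s ih =>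
    intro k hk x hx
    obtain ⟨hx1, hx2⟩ := hx
    have h2s : (0:ℝ) < 2^s := by positivity
    have h2s1 : (0:ℝ) < 2^(s+1) := by positivity
    have hpow : (2:ℝ)^(s+1) = 2 * 2^s := by ring
    rw [div_le_iff₀ h2s1] at hx1
    rw [le_div_iff₀ h2s1] at hx2
    rw [Function.iterate_succ_apply]
    by_cases hks : k < 2^s
    · have hkR : (k:ℝ) + 1 ≤ 2^s := by exact_mod_cast hks
      have hxhalf : x ≤ 1/2 := by nlinarith
      rw [hatFn_left hxhalf]
      have h2x : 2*x ∈ Set.Icc ((k:ℝ)/2^s) (((k:ℝ)+1)/2^s) := by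
        constructor
        · rw [div_le_iff₀ h2s]; nlinarith
        · rw [le_div_iff₀ h2s]; nlinarith
      rw [ih k hks (2*x) h2x]
      split_ifs <;> (push_cast; ring)
    · -- k ≥ 2^s
      have hksR : (2:ℝ)^s ≤ k := by exact_mod_cast Nat.le_of_not_lt hks
      have hxhalf : 1/2 ≤ x := by nlinarith
      rw [hatFn_right hxhalf]
      set k' : ℕ := 2^(s+1) - 1 - k with hk'
      have hk'R : (k':ℝ) = 2^(s+1) - 1 - k := by
        have h1 : k ≤ 2^(s+1) - 1 := by omega
        have h2 : 1 ≤ 2^(s+1) := Nat.one_le_two_pow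
        push_cast [hk', Nat.cast_sub h1, Nat.cast_sub h2]
        ring
      have hk's : k' < 2^s := by
        have := Nat.le_of_not_lt hks
        omega
      have hy : 2 - 2*x ∈ Set.Icc ((k':ℝ)/2^s) (((k':ℝ)+1)/2^s) := by
        constructor
        · rw [div_le_iff₀ h2s, hk'R]; push_cast; nlinarith
        · rw [le_div_iff₀ h2s, hk'R]; push_cast; nlinarith
      rw [ih k' hk's (2-2*x) hy]
      have hpar : Even k' ↔ ¬ Even k := by
        rcases Nat.even_or_odd k with h | h
        · constructor
          · intro h'
            exfalso
            have : ¬ Even k' := by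
              have : Odd k' := by
                have hk2 : k ≤ 2^(s+1) - 1 := by omega
                rcases h with ⟨m, hm⟩
                refine Nat.odd_iff.mpr ?_
                omega
              exact (Nat.not_even_iff_odd.mpr this)
            exact this h'
          · intro h'; exact absurd h h'
        · constructor
          · intro _; exact Nat.not_even_iff_odd.mpr h
          · intro _
            refine Nat.even_iff.mpr ?_
            rcases Nat.odd_iff.mp h with hk1
            have : k < 2^(s+1) := hk
            omega
      by_cases hE : Even k
      · rw [if_neg (by simp [hpar, hE]), if_pos hE, hk'R]
        push_cast; ring
      · rw [if_pos (hpar.mpr hE), if_neg hE, hk'R]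
        push_cast; ring

theorem stmt_18 (s : ℕ) (hs : 1 ≤ s) :
    ({x : ℝ | x ∈ Set.Ioo (0:ℝ) 1 ∧
        ¬ ∃ ε > (0:ℝ), ∃ a b : ℝ, ∀ y ∈ Set.Ioo (x - ε) (x + ε), hatFn^[s] y = a * y + b}
      = {x : ℝ | ∃ k : ℕ, 1 ≤ k ∧ k ≤ 2 ^ s - 1 ∧ x = (k : ℝ) / 2 ^ s}) ∧
    (∀ k : ℕ, 1 ≤ k → k ≤ 2 ^ s - 1 →
      hatFn^[s] ((k : ℝ) / 2 ^ s) = if Even k then 0 else 1) := by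
  have h2s : (0:ℝ) < 2^s := by positivity
  have h2sN : 2 ≤ 2^s := by
    calc 2 = 2^1 := by norm_num
    _ ≤ 2^s := Nat.pow_le_pow_right (by norm_num) hs
  have hval : ∀ k : ℕ, 1 ≤ k → k ≤ 2 ^ s - 1 →
      hatFn^[s] ((k : ℝ) / 2 ^ s) = if Even k then 0 else 1 := by
    intro k hk1 hk2
    have hks : k < 2^s := by omega
    have hmem : (k:ℝ)/2^s ∈ Set.Icc ((k:ℝ)/2^s) (((k:ℝ)+1)/2^s) := by
      constructor
      · exact le_refl _
      · gcongr <;> linarith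
    rw [hat_iter s k hks _ hmem]
    split_ifs
    · field_simp; ring
    · field_simp; ring
  refine ⟨?_, hval⟩
  ext x
  simp only [Set.mem_setOf_eq]
  constructor
  · rintro ⟨hx01, hnl⟩
    by_contra hnk
    push_neg at hnk
    apply hnl
    set k : ℕ := ⌊x * 2^s⌋₊ with hkdef
    have hxpos : 0 < x := hx01.1
    have hx1 : x < 1 := hx01.2
    have hkle : (k:ℝ) ≤ x * 2^s := Nat.floor_le (by positivity)
    have hklt : x * 2^s < k + 1 := Nat.lt_floor_add_one _
    have hkub : k < 2^s := by
      have : x * 2^s < 2^s := by nlinarith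
      have h2 : (k:ℝ) < 2^s := lt_of_le_of_lt hkle this
      exact_mod_cast h2
    have hne : (k:ℝ) ≠ x * 2^s := by
      intro heq
      have hxk : x = (k:ℝ)/2^s := by field_simp [heq.symm]; linarith
      have hk1 : 1 ≤ k := by
        by_contra h
        have : k = 0 := by omega
        rw [this] at heq
        simp at heq
        nlinarith
      exact hnk k hk1 (by omega) hxk
    have hklt' : (k:ℝ)/2^s < x := by
      rw [div_lt_iff₀ h2s]
      exact lt_of_le_of_ne hkle hne
    have hkgt' : x < ((k:ℝ)+1)/2^s := by
      rw [lt_div_iff₀ h2s]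
      exact hklt
    refine ⟨min (x - (k:ℝ)/2^s) (((k:ℝ)+1)/2^s - x), by simp [hklt', hkgt'], ?_⟩
    refine ⟨if Even k then 2^s else -2^s, if Even k then -(k:ℝ) else (k:ℝ)+1, ?_⟩
    intro y hy
    have hy1 : (k:ℝ)/2^s ≤ y := by
      have := hy.1
      have h1 : x - min (x - (k:ℝ)/2^s) (((k:ℝ)+1)/2^s - x) ≥ (k:ℝ)/2^s := by
        have := min_le_left (x - (k:ℝ)/2^s) (((k:ℝ)+1)/2^s - x)
        linarith
      linarith
    have hy2 : y ≤ ((k:ℝ)+1)/2^s := by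
      have := hy.2
      have := min_le_right (x - (k:ℝ)/2^s) (((k:ℝ)+1)/2^s - x)
      linarith
    rw [hat_iter s k hkub y ⟨hy1, hy2⟩]
    split_ifs <;> ring
  · rintro ⟨k, hk1, hk2, hxk⟩
    have hks : k < 2^s := by omega
    have hksR : (k:ℝ) < 2^s := by exact_mod_cast hks
    have hk1R : (1:ℝ) ≤ k := by exact_mod_cast hk1
    refine ⟨⟨by rw [hxk]; positivity, by rw [hxk, div_lt_one h2s]; exact hksR⟩, ?_⟩
    rintro ⟨ε, hε, a, b, hab⟩
    set δ : ℝ := min (ε/2) (1/2^s) with hδdef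
    have hδpos : 0 < δ := by positivity
    have hδε : δ < ε := lt_of_le_of_lt (min_le_left _ _) (by linarith)
    have hδs : δ ≤ 1/2^s := min_le_right _ _
    -- membership facts
    have hmemx : x ∈ Set.Icc ((k:ℝ)/2^s) (((k:ℝ)+1)/2^s) := by
      rw [hxk]
      constructor
      · exact le_refl _
      · gcongr <;> linarith
    have hmemr : x + δ ∈ Set.Icc ((k:ℝ)/2^s) (((k:ℝ)+1)/2^s) := by
      rw [hxk]
      constructor
      · nlinarith
      · have heq : ((k:ℝ)+1)/2^s = (k:ℝ)/2^s + 1/2^s := by ring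
        rw [heq]; linarith
    have hk1' : 1 ≤ k := hk1
    have hcast : ((k-1:ℕ):ℝ) = (k:ℝ) - 1 := by
      push_cast [Nat.cast_sub hk1']
      ring
    have hmeml : x - δ ∈ Set.Icc (((k-1:ℕ):ℝ)/2^s) ((((k-1:ℕ):ℝ)+1)/2^s) := by
      rw [hxk, hcast]
      constructor
      · have : ((k:ℝ)-1)/2^s = (k:ℝ)/2^s - 1/2^s := by ring
        rw [this]
        linarith
      · have : ((k:ℝ)-1+1)/2^s = (k:ℝ)/2^s := by ring
        rw [this]
        linarith
    have hkl : k - 1 < 2^s := by omega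
    have hEl : Even (k-1) ↔ ¬ Even k := by
      rw [Nat.even_sub hk1']
      simp
    have e1 := hab (x - δ) ⟨by linarith, by linarith⟩
    have e2 := hab x ⟨by linarith, by linarith⟩
    have e3 := hab (x + δ) ⟨by linarith, by linarith⟩
    rw [hat_iter s (k-1) hkl _ hmeml] at e1
    rw [hat_iter s k hks _ hmemx] at e2
    rw [hat_iter s k hks _ hmemr] at e3
    rw [hcast] at e1
    have hkx : (2:ℝ)^s * x = k := by rw [hxk]; field_simp
    by_cases hE : Even k
    · rw [if_neg (by rw [hEl]; exact fun h => h hE)] at e1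
      rw [if_pos hE] at e2 e3
      -- e1 : (k-1)+1 - 2^s*(k/2^s - δ) = a*(k/2^s - δ)+b
      -- e2 : 2^s*(k/2^s) - k = a*(k/2^s)+b
      -- e3 : 2^s*(k/2^s + δ) - k = a*(k/2^s + δ)+b
      nlinarith [hkx, e1, e2, e3]
    · rw [if_pos (hEl.mpr hE)] at e1
      rw [if_neg hE] at e2 e3
      nlinarith [hkx, e1, e2, e3]
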